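/- arXiv:2302.10141 — 6 statements merged into one kernel-verified Lean document; each statement's English description precedes it below -/
import Mathlib

section
/- Let s̄ satisfy the G₀-conditions. Then the graph G₀(s̄) is acyclic: there is no finite cycle x₀, x₁, …, x_{k-1}, x₀ with k ≥ 3, all x_i distinct, and consecutive vertices adjacent in G₀(s̄). -/
open Set

abbrev Cantor : Type := ℕ → Bool

/-- Prepend a finite binary sequence to an element of Cantor space. -/
def catSeq (t : List Bool) (x : Cantor) : Cantor :=
  fun n => if h : n < t.length then t.get ⟨n, h⟩ else x (n - t.length)

/-- The basic clopen set `[t]` of extensions of `t`. -/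
def cylinder (t : List Bool) : Set Cantor :=
  {x | ∀ i : ℕ, ∀ h : i < t.length, x i = t.get ⟨i, h⟩}

/-- The (symmetric) edge relation of the graph `G₀(s̄)`. -/
def G0Adj (s : ℕ → List Bool) (x y : Cantor) : Prop :=
  ∃ n : ℕ, ∃ z : Cantor,
    (x = catSeq (s n ++ [false]) z ∧ y = catSeq (s n ++ [true]) z) ∨
    (x = catSeq (s n ++ [true]) z ∧ y = catSeq (s n ++ [false]) z)

lemma catSeq_at (t : List Bool) (b : Bool) (z : Cantor) :
    catSeq (t ++ [b]) z t.length = b := by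
  have h : t.length < (t ++ [b]).length := by simp
  simp only [catSeq, dif_pos h, List.get_eq_getElem]
  exact List.getElem_concat_length rfl h

lemma catSeq_lt (t : List Bool) (b : Bool) (z : Cantor) (m : ℕ) (hm : m < t.length) :
    catSeq (t ++ [b]) z m = t[m] := by
  have h : m < (t ++ [b]).length := by simp; omega
  simp only [catSeq, dif_pos h, List.get_eq_getElem]
  exact List.getElem_append_left hm

lemma catSeq_gt (t : List Bool) (b : Bool) (z : Cantor) (m : ℕ) (hm : t.length < m) :
    catSeq (t ++ [b]) z m = z (m - (t.length + 1)) := by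
  simp only [catSeq, List.length_append, List.length_singleton]
  rw [dif_neg (by omega)]

/-- Structure of an edge: the endpoints differ exactly at coordinate `n`, and the
first endpoint extends `s n`. -/
lemma edge_props (s : ℕ → List Bool) (hlen : ∀ n, (s n).length = n) (x y : Cantor)
    (h : G0Adj s x y) :
    ∃ n, x n = !(y n) ∧ (∀ m, m ≠ n → x m = y m) ∧
      ∀ m, ∀ hm : m < (s n).length, x m = (s n)[m] := by
  obtain ⟨n, z, hc⟩ := h
  have hl := hlen n
  refine ⟨n, ?_, ?_, ?_⟩
  · have a1 := catSeq_at (s n) false z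
    have a2 := catSeq_at (s n) true z
    rw [hl] at a1 a2
    rcases hc with ⟨hx, hy⟩ | ⟨hx, hy⟩ <;> rw [hx, hy, a1, a2] <;> simp
  · intro m hm
    rcases lt_or_gt_of_ne hm with hm' | hm'
    · rcases hc with ⟨hx, hy⟩ | ⟨hx, hy⟩ <;>
        rw [hx, hy, catSeq_lt _ _ _ _ (by omega), catSeq_lt _ _ _ _ (by omega)]
    · rcases hc with ⟨hx, hy⟩ | ⟨hx, hy⟩ <;>
        rw [hx, hy, catSeq_gt _ _ _ _ (by omega), catSeq_gt _ _ _ _ (by omega)]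
  · intro m hm
    rcases hc with ⟨hx, hy⟩ | ⟨hx, hy⟩ <;> rw [hx, catSeq_lt _ _ _ _ hm]

/-- the graph `G₀(s̄)` is acyclic: there is no cycle
`x₀, x₁, …, x_{k-1}, x₀` with `k ≥ 3`, all vertices distinct, and consecutive
vertices adjacent. -/
theorem G0_acyclic (s : ℕ → List Bool) (hlen : ∀ n, (s n).length = n)
    (hdense : Dense (⋃ n, cylinder (s n))) :
    ¬ ∃ (k : ℕ) (x : ℕ → Cantor), 3 ≤ k ∧
        (∀ i j, i < j → j < k → x i ≠ x j) ∧ x k = x 0 ∧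
        (∀ i < k, G0Adj s (x i) (x (i + 1))) := by
  rintro ⟨k, x, hk3, hdist, hcyc, hadj⟩
  -- choose a level for each edge
  have H : ∀ i, ∃ n, i < k →
      (x i n = !(x (i+1) n) ∧ (∀ m, m ≠ n → x i m = x (i+1) m) ∧
        ∀ m, ∀ hm : m < (s n).length, x i m = (s n)[m]) := by
    intro i
    by_cases hi : i < k
    · obtain ⟨n, hn⟩ := edge_props s hlen _ _ (hadj i hi)
      exact ⟨n, fun _ => hn⟩
    · exact ⟨0, fun h => absurd h hi⟩
  choose lev hlev using H
  -- the maximal level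
  obtain ⟨i₀, hi₀mem, hi₀⟩ := Finset.exists_mem_eq_sup (Finset.range k)
    (by simp; omega) lev
  set N := (Finset.range k).sup lev with hN
  rw [Finset.mem_range] at hi₀mem
  have hle : ∀ i, i < k → lev i ≤ N := fun i hi =>
    Finset.le_sup (Finset.mem_range.mpr hi)
  -- a coordinate m is constant along stretches with no level-m edge
  have const : ∀ (m : ℕ) (a b : ℕ), a ≤ b → b ≤ k → (∀ t, a ≤ t → t < b → lev t ≠ m) →
      x a m = x b m := by
    intro m a b
    induction b with
    | zero =>
      intro hab _ _
      have : a = 0 := by omega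
      rw [this]
    | succ b ih =>
      intro hab hbk hno
      rcases Nat.lt_or_ge a (b+1) with h | h
      · have h1 : x a m = x b m := ih (by omega) (by omega)
          (fun t ht ht' => hno t ht (by omega))
        rw [h1]
        exact (hlev b (by omega)).2.1 m (fun e => hno b (by omega) (by omega) e.symm)
      · have : a = b + 1 := by omega
        rw [this]
  have hex : ∃ i, i < k ∧ lev i = N := ⟨i₀, hi₀mem, hi₀.symm⟩
  -- the least level-N edge
  let i := Nat.find hex
  obtain ⟨hik, hiN⟩ : i < k ∧ lev i = N := Nat.find_spec hex
  have himin : ∀ t, t < i → ¬ (t < k ∧ lev t = N) := fun t ht => Nat.find_min hex ht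
  -- there is another level-N edge after i
  have hex2 : ∃ j, i < j ∧ j < k ∧ lev j = N := by
    by_contra hno
    push_neg at hno
    have h1 : x 0 N = x i N := const N 0 i (by omega) (by omega)
      (fun t ht ht' => fun e => himin t ht' ⟨by omega, e⟩)
    have h2 : x (i+1) N = x k N := const N (i+1) k (by omega) le_rfl
      (fun t ht ht' => fun e => (hno t (by omega) ht') e)
    have h3 : x i N = !(x (i+1) N) := by
      have := (hlev i hik).1; rwa [hiN] at this
    rw [hcyc] at h2
    rw [← h1, h2] at h3
    simp at h3
  -- the least such j
  let j := Nat.find hex2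
  obtain ⟨hij, hjk, hjN⟩ : i < j ∧ j < k ∧ lev j = N := Nat.find_spec hex2
  have hjmin : ∀ t, t < j → ¬ (i < t ∧ t < k ∧ lev t = N) := fun t ht => Nat.find_min hex2 ht
  -- x (i+1) = x j
  have heq : x (i+1) = x j := by
    funext m
    rcases Nat.lt_or_ge m N with hm | hm
    · have hm' : m < (s N).length := by rw [hlen]; exact hm
      have c1 : x i m = (s N)[m] := by
        have := (hlev i hik).2.2; rw [hiN] at this; exact this m hm'
      have c2 : x j m = (s N)[m] := by
        have := (hlev j hjk).2.2; rw [hjN] at this; exact this m hm'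
      have b1 : x i m = x (i+1) m :=
        (hlev i hik).2.1 m (by rw [hiN]; omega)
      rw [← b1, c1, c2]
    · exact const m (i+1) j (by omega) (by omega)
        (fun t ht ht' e => by
          have hlt : lev t ≤ N := hle t (by omega)
          have hne : lev t ≠ N := fun e' => hjmin t ht' ⟨by omega, by omega, e'⟩
          omega)
  rcases Nat.lt_or_ge (i+1) j with hlt | hge
  · exact hdist (i+1) j hlt hjk heq
  · have hj' : j = i + 1 := by omega
    -- two consecutive level-N edges: x i = x (i+2)
    have heq2 : x i = x (i+2) := by
      funext m
      rcases eq_or_ne m N with hm | hm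
      · rw [hm]
        have h1 : x i N = !(x (i+1) N) := by have := (hlev i hik).1; rwa [hiN] at this
        have h2 : x (i+1) N = !(x (i+2) N) := by
          have := (hlev j hjk).1; rw [hjN, hj'] at this; exact this
        rw [h1, h2, Bool.not_not]
      · have b1 : x i m = x (i+1) m := (hlev i hik).2.1 m (by rw [hiN]; exact hm)
        have b2 : x (i+1) m = x (i+2) m := by
          have := (hlev j hjk).2.1 m (by rw [hjN]; exact hm)
          rwa [hj'] at this
        rw [b1, b2]
    rcases Nat.lt_or_ge (i+2) k with h2k | h2k
    · exact hdist i (i+2) (by omega) h2k heq2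
    · have hk2 : i + 2 = k := by omega
      have hi1 : 1 ≤ i := by omega
      exact hdist 0 i (by omega) (by omega) (by rw [← hcyc, ← hk2, heq2])
end

section
/- Every uncountable Borel subset of a Polish space is the union of 𝔡-many compact sets, where 𝔡 is the dominating number. -/
open Set

/-- The dominating number `𝔡`: least cardinality of a dominating family in `ω^ω`. -/
noncomputable def domNumber : Cardinal :=
  sInf {c : Cardinal |
    ∃ D : Set (ℕ → ℕ),
      (∀ f : ℕ → ℕ, ∃ g ∈ D, ∀ᶠ n in Filter.atTop, f n ≤ g n) ∧ c = Cardinal.mk D}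

lemma domNumber_mem :
    domNumber ∈ {c : Cardinal |
    ∃ D : Set (ℕ → ℕ),
      (∀ f : ℕ → ℕ, ∃ g ∈ D, ∀ᶠ n in Filter.atTop, f n ≤ g n) ∧ c = Cardinal.mk D} := by
  apply csInf_mem
  exact ⟨Cardinal.mk (Set.univ : Set (ℕ → ℕ)), Set.univ,
    fun f => ⟨f, mem_univ f, Filter.Eventually.of_forall fun n => le_rfl⟩, rfl⟩

lemma dominating_infinite (D : Set (ℕ → ℕ))
    (hD : ∀ f : ℕ → ℕ, ∃ g ∈ D, ∀ᶠ n in Filter.atTop, f n ≤ g n) :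
    Cardinal.aleph0 ≤ Cardinal.mk D := by
  by_contra h
  push_neg at h
  have hfin : D.Finite := Cardinal.lt_aleph0_iff_set_finite.mp h
  set f : ℕ → ℕ := fun n => (hfin.toFinset.sup fun g => g n) + 1 with hf
  obtain ⟨g, hg, hev⟩ := hD f
  obtain ⟨n, hn⟩ := hev.exists
  have hle : g n ≤ hfin.toFinset.sup fun g => g n :=
    Finset.le_sup (f := fun g => g n) (hfin.mem_toFinset.mpr hg)
  exact Nat.not_succ_le_self _ (le_trans hn hle)

/-- every uncountable Borel subset of a Polish space is the union of
`𝔡`-many compact sets. -/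
theorem borel_eq_union_domNumber_compacts (X : Type) [TopologicalSpace X] [PolishSpace X]
    [MeasurableSpace X] [BorelSpace X] (B : Set X) (hB : MeasurableSet B)
    (hunc : ¬ B.Countable) :
    ∃ (ι : Type) (K : ι → Set X),
      Cardinal.mk ι ≤ domNumber ∧ (∀ i, IsCompact (K i)) ∧ (⋃ i, K i) = B := by
  obtain ⟨D, hD, hcard⟩ := domNumber_mem
  have han := hB.analyticSet
  rw [MeasureTheory.AnalyticSet_def] at han
  rcases han with hempty | ⟨f, hf, hrange⟩
  · exact absurd (hempty ▸ countable_empty) hunc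
  set S : ↥D × ℕ → Set (ℕ → ℕ) := fun p => {h | ∀ n, h n ≤ p.1.1 n + p.2} with hS
  refine ⟨↥D × ℕ, fun p => f '' S p, ?_, ?_, ?_⟩
  · have : Cardinal.mk (↥D × ℕ) = Cardinal.mk D * Cardinal.aleph0 := by
      simp [Cardinal.mk_prod]
    rw [this, Cardinal.mul_eq_max (dominating_infinite D hD) le_rfl,
      max_eq_left (dominating_infinite D hD)]
    exact hcard.ge
  · intro p
    apply IsCompact.image _ hf
    have : S p = Set.pi Set.univ fun n => Set.Iic (p.1.1 n + p.2) := by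
      ext h; simp [hS, Set.mem_pi, Pi.le_def]
    rw [this]
    exact isCompact_univ_pi fun n => (Set.finite_Iic _).isCompact
  · have : (⋃ p : ↥D × ℕ, S p) = Set.univ := by
      ext h
      simp only [Set.mem_iUnion, Set.mem_univ, iff_true]
      obtain ⟨g, hg, hev⟩ := hD h
      obtain ⟨N, hN⟩ := Filter.eventually_atTop.mp hev
      refine ⟨(⟨g, hg⟩, (Finset.range N).sup h), fun n => ?_⟩
      show h n ≤ g n + (Finset.range N).sup h
      rcases lt_or_ge n N with h1 | h1
      · have : h n ≤ (Finset.range N).sup h := Finset.le_sup (Finset.mem_range.mpr h1)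
        omega
      · have := hN n h1
        omega
    rw [← Set.image_iUnion, this, Set.image_univ, hrange]
end

section
/- Any countable support product of ℵ₁-sized partial orders over an index set of arbitrary size has the ℵ₂-chain condition, assuming CH. Precisely: assume CH; let ⟨P_α : α < κ⟩ be partial orders each of cardinality at most ℵ₁, and let Q be the set of functions f with domain κ, f(α) ∈ P_α, and f(α) = 1_{P_α} for all but countably many α, ordered coordinatewise. Then Q has no antichain of size ℵ₂. -/
open Cardinal

namespace CSP13

open Set Ordinal

variable {ι : Type} {P : ι → Type} [∀ α, PartialOrder (P α)] [∀ α, OrderTop (P α)]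

/-- The countable support product. -/
abbrev QT (ι : Type) (P : ι → Type) [∀ α, PartialOrder (P α)] [∀ α, OrderTop (P α)] : Type :=
  {f : ∀ α, P α // {α | f α ≠ ⊤}.Countable}

/-- Support of a condition. -/
def supp (f : QT ι P) : Set ι := {α | f.1 α ≠ ⊤}

theorem supp_countable (f : QT ι P) : (supp f).Countable := f.2

/-- Union of supports of a set of conditions. -/
def SS (X : Set (QT ι P)) : Set ι := ⋃ f ∈ X, supp f

theorem SS_mono {X Y : Set (QT ι P)} (h : X ⊆ Y) : SS X ⊆ SS Y :=
  Set.biUnion_subset_biUnion_left h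

theorem supp_subset_SS {X : Set (QT ι P)} {f : QT ι P} (hf : f ∈ X) : supp f ⊆ SS X :=
  Set.subset_biUnion_of_mem hf

/-- The trace of a condition on the supports of a set of conditions. -/
def tr (X : Set (QT ι P)) (g : QT ι P) : Set (Σ α, P α) :=
  {p | p.1 ∈ SS X ∧ g.1 p.1 = p.2 ∧ p.2 ≠ ⊤}

theorem tr_eq_apply {X : Set (QT ι P)} {f g : QT ι P} (h : tr X f = tr X g)
    {α : ι} (hα : α ∈ SS X) : f.1 α = g.1 α := by
  by_cases hf : f.1 α = ⊤
  · by_cases hg : g.1 α = ⊤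
    · rw [hf, hg]
    · have : (⟨α, g.1 α⟩ : Σ α, P α) ∈ tr X g := ⟨hα, rfl, hg⟩
      rw [← h] at this
      exact this.2.1
  · have : (⟨α, f.1 α⟩ : Σ α, P α) ∈ tr X f := ⟨hα, rfl, hf⟩
    rw [h] at this
    exact this.2.1.symm

theorem tr_subset {X : Set (QT ι P)} (g : QT ι P) :
    tr X g ⊆ (fun α => (⟨α, g.1 α⟩ : Σ α, P α)) '' supp g := by
  rintro ⟨α, v⟩ ⟨-, hv, hvt⟩
  exact ⟨α, by simpa [supp, hv] using hvt, by simp [hv]⟩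

theorem tr_countable {X : Set (QT ι P)} (g : QT ι P) : (tr X g).Countable :=
  ((supp_countable g).image _).mono (tr_subset g)

theorem tr_fst_mem {X : Set (QT ι P)} (g : QT ι P) :
    tr X g ⊆ {p : Σ α, P α | p.1 ∈ SS X} := fun _ hp => hp.1

open scoped Classical in
/-- Pick a representative condition in `A` with a given trace. -/
noncomputable def wfn (A X : Set (QT ι P)) (t : Set (Σ α, P α)) : QT ι P :=
  if h : ∃ f ∈ A, tr X f = t then h.choose else ⟨fun _ => ⊤, by simp⟩

/-- The set of representatives of all traces of elements of `A` on `X`. -/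
def WW (A X : Set (QT ι P)) : Set (QT ι P) := wfn A X '' (tr X '' A)

theorem WW_subset {A X : Set (QT ι P)} : WW A X ⊆ A := by
  rintro - ⟨t, ⟨g, hg, rfl⟩, rfl⟩
  have h : ∃ f ∈ A, tr X f = tr X g := ⟨g, hg, rfl⟩
  rw [wfn, dif_pos h]
  exact h.choose_spec.1

theorem WW_spec (A X : Set (QT ι P)) {g : QT ι P} (hg : g ∈ A) :
    ∃ f ∈ WW A X, tr X f = tr X g := by
  have h : ∃ f ∈ A, tr X f = tr X g := ⟨g, hg, rfl⟩
  refine ⟨wfn A X (tr X g), ⟨tr X g, Set.mem_image_of_mem _ hg, rfl⟩, ?_⟩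
  rw [wfn, dif_pos h]
  exact h.choose_spec.2

/-- The stages of the closure construction. -/
noncomputable def CC (A : Set (QT ι P)) (o : Ordinal.{0}) : Set (QT ι P) :=
  (⋃ i : o.ToType, CC A (((@Ordinal.ToType.mk o).symm i : Set.Iio o) : Ordinal)) ∪
    WW A (⋃ i : o.ToType, CC A (((@Ordinal.ToType.mk o).symm i : Set.Iio o) : Ordinal))
termination_by o
decreasing_by all_goals exact ((@Ordinal.ToType.mk o).symm i).2

/-- Union of all earlier stages. -/
noncomputable def Xo (A : Set (QT ι P)) (o : Ordinal.{0}) : Set (QT ι P) :=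
  ⋃ i : o.ToType, CC A (((@Ordinal.ToType.mk o).symm i : Set.Iio o) : Ordinal)

theorem CC_eq (A : Set (QT ι P)) (o : Ordinal.{0}) : CC A o = Xo A o ∪ WW A (Xo A o) := by
  rw [CC]; rfl

theorem CC_subset_Xo {A : Set (QT ι P)} {o o' : Ordinal.{0}} (h : o' < o) :
    CC A o' ⊆ Xo A o := by
  have : CC A o' = CC A (((@Ordinal.ToType.mk o).symm (@Ordinal.ToType.mk o ⟨o', h⟩) : Set.Iio o) :
      Ordinal) := by simp
  rw [this, Xo]
  exact Set.subset_iUnion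
    (fun i => CC A (((@Ordinal.ToType.mk o).symm i : Set.Iio o) : Ordinal)) _

theorem CC_mono_lt {A : Set (QT ι P)} {o o' : Ordinal.{0}} (h : o' < o) :
    CC A o' ⊆ CC A o := by
  rw [CC_eq A o]
  exact (CC_subset_Xo h).trans Set.subset_union_left

theorem CC_mono {A : Set (QT ι P)} {o o' : Ordinal.{0}} (h : o' ≤ o) :
    CC A o' ⊆ CC A o := by
  rcases h.lt_or_eq with h | rfl
  · exact CC_mono_lt h
  · exact subset_rfl

theorem Xo_succ (A : Set (QT ι P)) (o : Ordinal.{0}) : Xo A (Order.succ o) = CC A o := by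
  apply Set.Subset.antisymm
  · apply Set.iUnion_subset
    intro i
    exact CC_mono (Order.lt_succ_iff.1 ((@Ordinal.ToType.mk _).symm i).2)
  · exact CC_subset_Xo (Order.lt_succ o)

theorem CC_subset_A {A : Set (QT ι P)} (o : Ordinal.{0}) : CC A o ⊆ A := by
  induction o using Ordinal.induction with
  | h o IH =>
    rw [CC_eq]
    apply Set.union_subset
    · exact Set.iUnion_subset fun i => IH _ ((@Ordinal.ToType.mk o).symm i).2
    · exact WW_subset

theorem Xo_subset_A {A : Set (QT ι P)} (o : Ordinal.{0}) : Xo A o ⊆ A :=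
  Set.iUnion_subset fun i => CC_subset_A _

/-! ### Cardinality estimates -/

theorem aleph_one_power_aleph0 (hCH : Cardinal.continuum.{0} = Cardinal.aleph.{0} 1) :
    (Cardinal.aleph.{0} 1) ^ (ℵ₀ : Cardinal.{0}) = Cardinal.aleph.{0} 1 := by
  rw [← hCH, ← two_power_aleph0, ← power_mul, aleph0_mul_aleph0]

/-- Under CH, a type of size `≤ ℵ₁` has at most `ℵ₁` countable subsets. -/
theorem mk_countable_subsets_le {β : Type} (hβ : #β ≤ Cardinal.aleph 1)
    (hCH : Cardinal.continuum.{0} = Cardinal.aleph.{0} 1) :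
    #{s : Set β // s.Countable} ≤ Cardinal.aleph 1 := by
  have hsurj : Function.Surjective
      (fun f : ℕ → Option β => (⟨{b | ∃ n, f n = some b},
        ((Set.countable_range f).preimage (Option.some_injective β)).mono
          (fun b hb => hb)⟩ : {s : Set β // s.Countable})) := by
    rintro ⟨s, hs⟩
    rcases s.eq_empty_or_nonempty with rfl | hne
    · exact ⟨fun _ => none, by ext b; simp⟩
    · obtain ⟨e, he⟩ := hs.exists_eq_range hne
      refine ⟨fun n => some (e n), ?_⟩
      ext b
      simp [he, eq_comm, Set.range]
  calc #{s : Set β // s.Countable} ≤ #(ℕ → Option β) := mk_le_of_surjective hsurj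
    _ = #(Option β) ^ (ℵ₀ : Cardinal.{0}) := by rw [← mk_nat]; exact (power_def _ _).symm
    _ ≤ (Cardinal.aleph 1) ^ ℵ₀ := by
        apply power_le_power_right
        rw [mk_option]
        calc #β + 1 ≤ Cardinal.aleph 1 + Cardinal.aleph 1 :=
              add_le_add hβ (one_le_aleph0.trans (aleph0_le_aleph 1))
          _ = Cardinal.aleph 1 := add_eq_self (aleph0_le_aleph 1)
    _ = Cardinal.aleph 1 := aleph_one_power_aleph0 hCH

theorem mk_SS_le {X : Set (QT ι P)} (hX : #X ≤ Cardinal.aleph 1) :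
    #(SS X) ≤ Cardinal.aleph 1 := by
  rw [SS, Set.biUnion_eq_iUnion]
  calc #(⋃ f : X, supp f.1) ≤ Cardinal.sum fun f : X => #(supp f.1) := mk_iUnion_le_sum_mk
    _ ≤ Cardinal.sum fun _ : X => Cardinal.aleph 1 :=
        Cardinal.sum_le_sum _ _ fun f =>
          (le_aleph0_iff_set_countable.2 (supp_countable f.1)).trans (aleph0_le_aleph 1)
    _ = #X * Cardinal.aleph 1 := sum_const' _ _
    _ ≤ Cardinal.aleph 1 * Cardinal.aleph 1 := mul_le_mul_left hX _
    _ = Cardinal.aleph 1 := mul_eq_self (aleph0_le_aleph 1)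

theorem mk_sigma_part_le (hP : ∀ α, #(P α) ≤ Cardinal.aleph 1) {s : Set ι}
    (hs : #s ≤ Cardinal.aleph 1) :
    #{p : Σ α, P α // p.1 ∈ s} ≤ Cardinal.aleph 1 := by
  have e : {p : Σ α, P α // p.1 ∈ s} ≃ Σ α : s, P α :=
    { toFun := fun p => ⟨⟨p.1.1, p.2⟩, p.1.2⟩
      invFun := fun q => ⟨⟨q.1.1, q.2⟩, q.1.2⟩
      left_inv := fun p => rfl
      right_inv := fun q => rfl }
  rw [Cardinal.mk_congr e, mk_sigma]
  calc (Cardinal.sum fun α : s => #(P α.1)) ≤ Cardinal.sum fun _ : s => Cardinal.aleph 1 :=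
        Cardinal.sum_le_sum _ _ fun α => hP α.1
    _ = #s * Cardinal.aleph 1 := sum_const' _ _
    _ ≤ Cardinal.aleph 1 * Cardinal.aleph 1 := mul_le_mul_left hs _
    _ = Cardinal.aleph 1 := mul_eq_self (aleph0_le_aleph 1)

theorem mk_WW_le (hCH : Cardinal.continuum.{0} = Cardinal.aleph.{0} 1)
    (hP : ∀ α, #(P α) ≤ Cardinal.aleph 1) {A X : Set (QT ι P)}
    (hX : #X ≤ Cardinal.aleph 1) : #(WW A X) ≤ Cardinal.aleph 1 := by
  set T : Set (Σ α, P α) := {p | p.1 ∈ SS X} with hT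
  have hTcard : #T ≤ Cardinal.aleph 1 := mk_sigma_part_le hP (mk_SS_le hX)
  -- traces are countable subsets of T
  have himg : tr X '' A ⊆ {t : Set (Σ α, P α) | t.Countable ∧ t ⊆ T} := by
    rintro - ⟨g, -, rfl⟩
    exact ⟨tr_countable g, tr_fst_mem g⟩
  have hinj : Function.Injective
      (fun t : {t : Set (Σ α, P α) // t.Countable ∧ t ⊆ T} =>
        (⟨Subtype.val ⁻¹' t.1, t.2.1.preimage Subtype.coe_injective⟩ :
          {s : Set T // s.Countable})) := by
    rintro ⟨t, ht⟩ ⟨t', ht'⟩ h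
    have h' : (Subtype.val ⁻¹' t : Set T) = Subtype.val ⁻¹' t' :=
      congrArg Subtype.val h
    apply Subtype.ext
    calc t = Subtype.val '' (Subtype.val ⁻¹' t : Set T) := by
            rw [Set.image_preimage_eq_inter_range, Subtype.range_coe,
              Set.inter_eq_self_of_subset_left ht.2]
      _ = Subtype.val '' (Subtype.val ⁻¹' t' : Set T) := by rw [h']
      _ = t' := by
            rw [Set.image_preimage_eq_inter_range, Subtype.range_coe,
              Set.inter_eq_self_of_subset_left ht'.2]
  calc #(WW A X) ≤ #(tr X '' A) := mk_image_le
    _ ≤ #{t : Set (Σ α, P α) | t.Countable ∧ t ⊆ T} := mk_le_mk_of_subset himg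
    _ ≤ #{s : Set T // s.Countable} := mk_le_of_injective hinj
    _ ≤ Cardinal.aleph 1 := mk_countable_subsets_le hTcard hCH

theorem mk_stages_le (hCH : Cardinal.continuum.{0} = Cardinal.aleph.{0} 1)
    (hP : ∀ α, #(P α) ≤ Cardinal.aleph 1) (A : Set (QT ι P)) :
    ∀ o : Ordinal.{0}, o ≤ (Cardinal.aleph 1).ord →
      #(Xo A o) ≤ Cardinal.aleph 1 ∧ #(CC A o) ≤ Cardinal.aleph 1 := by
  intro o
  induction o using Ordinal.induction with
  | h o IH =>
    intro ho
    have hXo : #(Xo A o) ≤ Cardinal.aleph 1 := by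
      rw [Xo]
      calc #(⋃ i : o.ToType, CC A (((@Ordinal.ToType.mk o).symm i : Set.Iio o) : Ordinal))
          ≤ Cardinal.sum fun i : o.ToType =>
            #(CC A (((@Ordinal.ToType.mk o).symm i : Set.Iio o) : Ordinal)) := mk_iUnion_le_sum_mk
        _ ≤ Cardinal.sum fun _ : o.ToType => Cardinal.aleph 1 :=
            Cardinal.sum_le_sum _ _ fun i => by
              have hi := ((@Ordinal.ToType.mk o).symm i).2
              exact (IH _ hi (le_of_lt (lt_of_lt_of_le hi ho))).2
        _ = #o.ToType * Cardinal.aleph 1 := sum_const' _ _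
        _ ≤ Cardinal.aleph 1 * Cardinal.aleph 1 := by
            apply mul_le_mul_left
            rw [mk_toType]
            exact (Ordinal.card_le_card ho).trans (by rw [card_ord])
        _ = Cardinal.aleph 1 := mul_eq_self (aleph0_le_aleph 1)
    refine ⟨hXo, ?_⟩
    rw [CC_eq]
    calc #(Xo A o ∪ WW A (Xo A o) : Set (QT ι P)) ≤ #(Xo A o) + #(WW A (Xo A o)) :=
          mk_union_le _ _
      _ ≤ Cardinal.aleph 1 + Cardinal.aleph 1 := add_le_add hXo (mk_WW_le hCH hP hXo)
      _ = Cardinal.aleph 1 := add_eq_self (aleph0_le_aleph 1)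

end CSP13

open CSP13

/-- under CH, a countable support product of partial orders of size
at most `ℵ₁` has no antichain of size `ℵ₂`. -/
theorem countable_support_product_aleph2_cc
    (hCH : Cardinal.continuum = Cardinal.aleph 1)
    (ι : Type) (P : ι → Type) [∀ α, PartialOrder (P α)] [∀ α, OrderTop (P α)]
    (hP : ∀ α, Cardinal.mk (P α) ≤ Cardinal.aleph 1)
    (A : Set {f : ∀ α, P α // {α | f α ≠ ⊤}.Countable})
    (hA : ∀ f ∈ A, ∀ g ∈ A, f ≠ g →
      ¬ ∃ h : {f : ∀ α, P α // {α | f α ≠ ⊤}.Countable},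
          (∀ α, h.1 α ≤ f.1 α) ∧ (∀ α, h.1 α ≤ g.1 α)) :
    Cardinal.mk A < Cardinal.aleph 2 := by
  classical
  have hCH0 : (Cardinal.continuum : Cardinal.{0}) = Cardinal.aleph 1 :=
    Cardinal.lift_injective (by
      rw [Cardinal.lift_continuum, Cardinal.lift_aleph, Ordinal.lift_one]; exact hCH)
  clear hCH
  by_contra h0
  push_neg at h0
  set ω₁ : Ordinal.{0} := (Cardinal.aleph 1).ord with hω₁
  -- the closure
  set U : Set (QT ι P) := Xo A ω₁ with hU
  have hUcard : Cardinal.mk U ≤ Cardinal.aleph 1 := (mk_stages_le hCH0 hP A ω₁ le_rfl).1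
  have hUA : U ⊆ A := Xo_subset_A _
  -- pick g ∈ A \ U
  have hnotsub : ¬ (A ⊆ U) := by
    intro hsub
    have : Cardinal.mk A ≤ Cardinal.aleph 1 := (Cardinal.mk_le_mk_of_subset hsub).trans hUcard
    have h12 : Cardinal.aleph 1 < Cardinal.aleph 2 :=
      Cardinal.aleph_lt_aleph.2 (by norm_num)
    exact absurd (h0.trans this) (not_le.2 h12)
  obtain ⟨g, hgA, hgU⟩ := Set.not_subset.1 hnotsub
  -- stage function
  have hstage : ∀ α ∈ SS U, ∃ o' : Ordinal.{0}, o' < ω₁ ∧ α ∈ SS (CC A o') := by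
    intro α hα
    obtain ⟨f, hfU, hαf⟩ := Set.mem_iUnion₂.1 hα
    obtain ⟨i, hfi⟩ := Set.mem_iUnion.1 hfU
    exact ⟨_, ((@Ordinal.ToType.mk ω₁).symm i).2,
      supp_subset_SS hfi hαf⟩
  have hω₁lim : Order.IsSuccLimit ω₁ := Cardinal.isSuccLimit_ord (Cardinal.aleph0_le_aleph 1)
  have hω₁pos : (0 : Ordinal) < ω₁ := hω₁lim.pos
  -- the supremum stage
  let ρ : ↥(supp g) → Ordinal.{0} := fun α =>
    if h : (α : ι) ∈ SS U then (hstage α h).choose else 0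
  have hρ : ∀ α, ρ α < ω₁ := by
    intro α
    by_cases h : (α : ι) ∈ SS U
    · simpa [ρ, h] using (hstage α h).choose_spec.1
    · simpa [ρ, h] using hω₁pos
  have hcnt : Cardinal.mk (supp g : Set ι) < (ω₁).cof := by
    rw [hω₁, Cardinal.isRegular_aleph_one.cof_eq]
    exact (Cardinal.countable_iff_lt_aleph_one _).1 (supp_countable g)
  have hostar : iSup ρ < ω₁ := Ordinal.iSup_lt_ord hcnt hρ
  set ostar : Ordinal.{0} := iSup ρ with hostar_def
  -- the key closure property
  have hclosure : supp g ∩ SS U ⊆ SS (CC A ostar) := by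
    rintro α ⟨h1, h2⟩
    have hmem : (α : ι) ∈ SS (CC A (ρ ⟨α, h1⟩)) := by
      simpa [ρ, h2] using (hstage α h2).choose_spec.2
    exact SS_mono (CC_mono (Ordinal.le_iSup ρ ⟨α, h1⟩)) hmem
  -- get the witness f
  obtain ⟨f, hfW, hftr⟩ := WW_spec A (Xo A (Order.succ ostar)) hgA
  rw [Xo_succ] at hftr
  have hfC : f ∈ CC A (Order.succ ostar) := by
    rw [CC_eq]
    right
    rwa [Xo_succ] at hfW ⊢
  have hfU : f ∈ U := CC_subset_Xo (hω₁lim.succ_lt hostar) hfC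
  have hfA : f ∈ A := hUA hfU
  have hfg : f ≠ g := fun h => hgU (h ▸ hfU)
  -- f and g agree on supp f ∩ supp g
  have hagree : ∀ α, α ∈ supp f → α ∈ supp g → f.1 α = g.1 α := by
    intro α hαf hαg
    have hαU : α ∈ SS U := supp_subset_SS hfU hαf
    exact tr_eq_apply hftr (hclosure ⟨hαg, hαU⟩)
  -- build the common lower bound
  refine hA f hfA g hgA hfg ⟨⟨fun α => if f.1 α = ⊤ then g.1 α else f.1 α, ?_⟩, ?_, ?_⟩
  · apply ((supp_countable f).union (supp_countable g)).mono
    intro α hα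
    simp only [Set.mem_setOf_eq] at hα
    by_cases h : f.1 α = ⊤
    · right; rw [if_pos h] at hα; exact hα
    · left; exact h
  · intro α
    by_cases h : f.1 α = ⊤
    · simp only [if_pos h, h]; exact le_top
    · simp only [if_neg h]; exact le_rfl
  · intro α
    by_cases h : f.1 α = ⊤
    · simp only [if_pos h]; exact le_rfl
    · simp only [if_neg h]
      by_cases hg : g.1 α = ⊤
      · rw [hg]; exact le_top
      · rw [hagree α h hg]
end

section
/- Under CH, the Δ-system lemma for countable sets: any family of ℵ₂-many countable sets contains a subfamily of size ℵ₂ forming a Δ-system (pairwise intersections all equal to a fixed kernel). -/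
open Cardinal Set Ordinal

namespace DeltaAux

noncomputable section

/-- In the canonical well-order of type `c.ord` for regular `c`, every subset of
cardinality `< c` has a strict upper bound. -/
lemma bound_toType {c : Cardinal.{0}} (hc : c.IsRegular) (S : Set c.ord.ToType)
    (hS : #S < c) : ∃ b : c.ord.ToType, ∀ s ∈ S, s < b := by
  have hlim : Order.IsSuccLimit c.ord := Cardinal.isSuccLimit_ord hc.aleph0_le
  set E := Ordinal.ToType.mk (o := c.ord) with hE
  set f : S → Ordinal := fun s => (E.symm s.1).1 with hf
  have hfo : ∀ s : S, f s < c.ord := fun s => (E.symm s.1).2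
  have hsup : (⨆ s, f s) < c.ord := Cardinal.iSup_lt_ord_of_isRegular hc hS hfo
  have hsup1 : Order.succ (⨆ s, f s) < c.ord := hlim.succ_lt hsup
  refine ⟨E ⟨Order.succ (⨆ s, f s), hsup1⟩, fun s hs => ?_⟩
  have h1 : f ⟨s, hs⟩ ≤ ⨆ s, f s := Ordinal.le_iSup f ⟨s, hs⟩
  have h2 : E.symm s < E.symm (E ⟨Order.succ (⨆ s, f s), hsup1⟩) := by
    rw [OrderIso.symm_apply_apply]
    exact Subtype.mk_lt_mk.mpr (h1.trans_lt (Order.lt_succ _))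
  simpa using (OrderIso.lt_iff_lt E.symm).mp h2

lemma mk_Iic_lt {c : Cardinal.{0}} (hc : c.IsRegular) (b : c.ord.ToType) :
    #(Iic b) < c := by
  have h1 : #(Iic b) ≤ #(Iio b) + 1 := by
    rw [← Set.Iio_insert]
    exact mk_insert_le
  exact h1.trans_lt (add_lt_of_lt hc.aleph0_le (mk_Iio_ord_toType b)
    (one_lt_aleph0.trans_le hc.aleph0_le))

lemma reg2 : (aleph 2).IsRegular := by
  have h2 : (2 : Ordinal) = Order.succ 1 := by
    rw [← Ordinal.add_one_eq_succ]; norm_num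
  rw [h2, aleph_succ]
  exact isRegular_succ (aleph0_le_aleph 1)

lemma aleph2_succ : aleph 2 = Order.succ (aleph 1) := by
  have h2 : (2 : Ordinal) = Order.succ 1 := by
    rw [← Ordinal.add_one_eq_succ]; norm_num
  rw [h2, aleph_succ]

lemma le_aleph1_of_lt_aleph2 {a : Cardinal} (h : a < aleph 2) : a ≤ aleph 1 := by
  rw [aleph2_succ] at h
  exact Order.lt_succ_iff.mp h

end

end DeltaAux

namespace DeltaAux

noncomputable section

abbrev W : Type := (aleph 2).ord.ToType
abbrev O1 : Type := (aleph 1).ord.ToType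

lemma mkW : #W = aleph 2 := by rw [mk_toType, card_ord]
lemma mkO1 : #O1 = aleph 1 := by rw [mk_toType, card_ord]

/-- choice of a strict upper bound for a small subset of `W`. -/
def bndW (S : Set W) (hS : #S < aleph 2) : W := (bound_toType reg2 S hS).choose

lemma bndW_spec (S : Set W) (hS : #S < aleph 2) : ∀ s ∈ S, s < bndW S hS :=
  (bound_toType reg2 S hS).choose_spec

lemma mk_union_lt (h : W → W) (γ : W) : #((h '' Iic γ) ∪ Iic γ : Set W) < aleph 2 :=
  (mk_union_le _ _).trans_lt (add_lt_of_lt reg2.aleph0_le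
    (mk_image_le.trans_lt (mk_Iic_lt reg2 γ)) (mk_Iic_lt reg2 γ))

/-- step function: a strict upper bound of `γ` and of all `h β`, `β ≤ γ`. -/
def Ew (h : W → W) (γ : W) : W := bndW ((h '' Iic γ) ∪ Iic γ) (mk_union_lt h γ)

lemma lt_Ew (h : W → W) (γ : W) : γ < Ew h γ :=
  bndW_spec _ _ γ (mem_union_right _ (mem_Iic.2 le_rfl))

lemma h_lt_Ew (h : W → W) {β γ : W} (hβ : β ≤ γ) : h β < Ew h γ :=
  bndW_spec _ _ _ (mem_union_left _ ⟨β, mem_Iic.2 hβ, rfl⟩)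

lemma mk_range_tseq_lt {ζ : O1} (g : Iio ζ → W) : #(Set.range g) < aleph 2 :=
  mk_range_le.trans_lt ((mk_Iio_ord_toType ζ).trans
    (aleph_lt_aleph.mpr (by norm_num)))

/-- The `ω₁`-sequence used to find a closure point of `h` of uncountable cofinality. -/
def tseq (h : W → W) : O1 → W :=
  (IsWellFounded.wf (α := O1) (r := (· < ·))).fix fun ζ ih =>
    Ew h (bndW (Set.range fun η : Iio ζ => ih η.1 η.2) (mk_range_tseq_lt _))

lemma tseq_eq (h : W → W) (ζ : O1) :
    tseq h ζ = Ew h (bndW (Set.range fun η : Iio ζ => tseq h η.1) (mk_range_tseq_lt _)) := by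
  conv_lhs => rw [tseq, WellFounded.fix_eq]
  rfl

lemma tseq_lt (h : W → W) {η ζ : O1} (hlt : η < ζ) : tseq h η < tseq h ζ := by
  rw [tseq_eq h ζ]
  have h1 : tseq h η < bndW (Set.range fun η : Iio ζ => tseq h η.1) (mk_range_tseq_lt _) :=
    bndW_spec _ _ _ ⟨⟨η, hlt⟩, rfl⟩
  exact h1.trans (lt_Ew _ _)

lemma h_lt_tseq (h : W → W) {ζ : O1} {β : W} (hβ : ∃ η, η < ζ ∧ β ≤ tseq h η) :
    h β < tseq h ζ := by
  obtain ⟨η, hη, hβη⟩ := hβ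
  rw [tseq_eq h ζ]
  have h1 : tseq h η < bndW (Set.range fun η : Iio ζ => tseq h η.1) (mk_range_tseq_lt _) :=
    bndW_spec _ _ _ ⟨⟨η, hη⟩, rfl⟩
  exact h_lt_Ew h (hβη.trans h1.le)

lemma istar_aux (h : W → W) : {b : W | ∀ ζ, tseq h ζ < b}.Nonempty := by
  obtain ⟨b, hb⟩ := bound_toType reg2 (Set.range (tseq h))
    (mk_range_le.trans_lt (by rw [mkO1]; exact aleph_lt_aleph.mpr (by norm_num)))
  exact ⟨b, fun ζ => hb _ (mem_range_self ζ)⟩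

/-- the closure point `i*`. -/
def istar (h : W → W) : W :=
  (IsWellFounded.wf (α := W) (r := (· < ·))).min {b : W | ∀ ζ, tseq h ζ < b} (istar_aux h)

lemma tseq_lt_istar (h : W → W) (ζ : O1) : tseq h ζ < istar h :=
  (IsWellFounded.wf (α := W) (r := (· < ·))).min_mem _ (istar_aux h) ζ

lemma exists_le_tseq (h : W → W) {β : W} (hβ : β < istar h) : ∃ ζ, β ≤ tseq h ζ := by
  by_contra hcon
  push_neg at hcon
  exact (IsWellFounded.wf (α := W) (r := (· < ·))).not_lt_min
    {b : W | ∀ ζ, tseq h ζ < b} hcon hβ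

lemma h_lt_istar (h : W → W) {β : W} (hβ : β < istar h) : h β < istar h := by
  obtain ⟨ζ, hζ⟩ := exists_le_tseq h hβ
  haveI : NoMaxOrder O1 := Cardinal.noMaxOrder (aleph0_le_aleph 1)
  obtain ⟨η, hη⟩ := exists_gt ζ
  exact (h_lt_tseq h ⟨ζ, hη, hζ⟩).trans (tseq_lt_istar h η)

end

end DeltaAux

namespace DeltaAux

noncomputable section

variable (Ahat : W → Set W) (hcnt : ∀ w, (Ahat w).Countable)

include hcnt

lemma stepA1 : ∃ β₀ : W, aleph 2 ≤ #{w : W | Ahat w ∩ Iio w ⊆ Iio β₀} := by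
  by_contra hcon
  push_neg at hcon
  set h : W → W := fun β => bndW {w : W | Ahat w ∩ Iio w ⊆ Iio β} (hcon β) with hh
  set i := istar h with hi
  have hC : (Ahat i ∩ Iio i).Countable := (hcnt i).mono inter_subset_left
  have hx : ∀ x : (Ahat i ∩ Iio i : Set W), ∃ ζ : O1, (x : W) ≤ tseq h ζ :=
    fun x => exists_le_tseq h x.2.2
  choose g hg using hx
  haveI : Countable (Ahat i ∩ Iio i : Set W) := hC.to_subtype
  obtain ⟨zs, hzs⟩ := bound_toType isRegular_aleph_one (Set.range g)
    (mk_range_le.trans_lt ((mk_le_aleph0_iff.mpr inferInstance).trans_lt aleph0_lt_aleph_one))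
  have hβ₀ : i ∈ {w : W | Ahat w ∩ Iio w ⊆ Iio (tseq h zs)} := by
    intro x hx'
    exact lt_of_le_of_lt (hg ⟨x, hx'⟩) (tseq_lt h (hzs _ (mem_range_self _)))
  have h1 : i < h (tseq h zs) := bndW_spec _ _ i hβ₀
  have h2 : h (tseq h zs) < i := h_lt_istar h (tseq_lt_istar h zs)
  exact absurd h1 (lt_asymm h2)

lemma stepA2 (hCH1 : (aleph 1 : Cardinal.{0}) ^ (ℵ₀ : Cardinal) = aleph 1) :
    ∃ R : Set W, aleph 2 ≤ #{w : W | Ahat w ∩ Iio w = R} := by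
  obtain ⟨β₀, hβ₀⟩ := stepA1 Ahat hcnt
  set T := {w : W | Ahat w ∩ Iio w ⊆ Iio β₀} with hT
  have hB : #{t : Set W // t ⊆ Iio β₀ ∧ #t ≤ ℵ₀} ≤ aleph 1 := by
    refine (mk_bounded_subset_le _ _).trans ?_
    have h1 : max #(Iio β₀) ℵ₀ ≤ aleph 1 := by
      refine max_le ?_ (aleph0_le_aleph 1)
      exact le_aleph1_of_lt_aleph2 (mk_Iio_ord_toType β₀)
    calc max #(Iio β₀) ℵ₀ ^ (ℵ₀ : Cardinal) ≤ aleph 1 ^ (ℵ₀ : Cardinal) :=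
          power_le_power_right h1
      _ = aleph 1 := hCH1
  set F : T → {t : Set W // t ⊆ Iio β₀ ∧ #t ≤ ℵ₀} := fun w =>
    ⟨Ahat w ∩ Iio w, w.2, le_aleph0_iff_set_countable.mpr ((hcnt w).mono inter_subset_left)⟩
    with hF
  by_contra hcon
  push_neg at hcon
  have hfib : ∀ b, #(F ⁻¹' {b}) ≤ aleph 1 := by
    intro b
    have h2 := hcon b.1
    have h3 : #(F ⁻¹' {b}) ≤ #{w : W | Ahat w ∩ Iio w = b.1} := by
      refine ⟨⟨fun x => ⟨x.1.1, ?_⟩, ?_⟩⟩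
      · have hx := x.2
        simp only [mem_preimage, mem_singleton_iff, hF] at hx
        exact congrArg Subtype.val hx
      · intro x y hxy
        exact Subtype.ext (Subtype.ext (by simpa using congrArg Subtype.val hxy))
    exact le_aleph1_of_lt_aleph2 (h3.trans_lt h2)
  have hcontra : aleph 2 ≤ aleph 1 := by
    calc aleph 2 ≤ #T := hβ₀
      _ = #(Σ b, F ⁻¹' {b}) := mk_congr (Equiv.sigmaFiberEquiv F).symm
      _ = Cardinal.sum (fun b => #(F ⁻¹' {b})) := mk_sigma _
      _ ≤ Cardinal.sum (fun _ => aleph 1) := sum_le_sum _ _ hfib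
      _ = #{t : Set W // t ⊆ Iio β₀ ∧ #t ≤ ℵ₀} * aleph 1 := sum_const' _ _
      _ ≤ aleph 1 * aleph 1 := mul_le_mul_left hB _
      _ = aleph 1 := mul_eq_self (aleph0_le_aleph 1)
  exact absurd hcontra (not_le.mpr (aleph_lt_aleph.mpr (by norm_num)))

lemma mainW (hCH1 : (aleph 1 : Cardinal.{0}) ^ (ℵ₀ : Cardinal) = aleph 1) :
    ∃ (Y : Set W) (R : Set W), aleph 2 ≤ #Y ∧
      ∀ i ∈ Y, ∀ j ∈ Y, i ≠ j → Ahat i ∩ Ahat j = R := by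
  obtain ⟨R, hR⟩ := stepA2 Ahat hcnt hCH1
  set X' := {w : W | Ahat w ∩ Iio w = R} with hX'
  have hunb : ∀ b : W, ∃ x, x ∈ X' ∧ b < x := by
    intro b
    by_contra hcon
    push_neg at hcon
    have hsub : X' ⊆ Iic b := fun x hx => mem_Iic.mpr (hcon x hx)
    exact absurd (hR.trans (mk_le_mk_of_subset hsub)) (not_le.mpr (mk_Iic_lt reg2 b))
  choose pick hpick1 hpick2 using hunb
  have hcard : ∀ (w : W) (g : ∀ v : W, v < w → W),
      #(⋃ v : Iio w, insert (g v.1 v.2) (Ahat (g v.1 v.2))) < aleph 2 := by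
    intro w g
    calc #(⋃ v : Iio w, insert (g v.1 v.2) (Ahat (g v.1 v.2)))
        ≤ Cardinal.sum (fun v : Iio w => #(insert (g v.1 v.2) (Ahat (g v.1 v.2)) : Set W)) :=
          mk_iUnion_le_sum_mk
      _ ≤ Cardinal.sum (fun _ : Iio w => ℵ₀) := sum_le_sum _ _ (fun v =>
          le_aleph0_iff_set_countable.mpr (((hcnt _).insert _)))
      _ = #(Iio w) * ℵ₀ := sum_const' _ _
      _ < aleph 2 := mul_lt_of_lt reg2.aleph0_le (mk_Iio_ord_toType w)
          (aleph0_lt_aleph_one.trans (aleph_lt_aleph.mpr (by norm_num)))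
  set t2 : W → W := (IsWellFounded.wf (α := W) (r := (· < ·))).fix
    (fun w ih => pick (bndW (⋃ v : Iio w, insert (ih v.1 v.2) (Ahat (ih v.1 v.2)))
      (hcard w ih))) with ht2
  have ht2eq : ∀ w, t2 w = pick (bndW (⋃ v : Iio w, insert (t2 v.1) (Ahat (t2 v.1)))
      (hcard w (fun v _ => t2 v))) := by
    intro w
    conv_lhs => rw [ht2, WellFounded.fix_eq]
  have ht2X : ∀ w, t2 w ∈ X' := fun w => by rw [ht2eq w]; exact hpick1 _
  have hmono : ∀ v w : W, v < w → t2 v < t2 w ∧ ∀ x ∈ Ahat (t2 v), x < t2 w := by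
    intro v w hvw
    have hb := bndW_spec (⋃ v : Iio w, insert (t2 v.1) (Ahat (t2 v.1)))
      (hcard w (fun v _ => t2 v))
    have hbp : bndW (⋃ v : Iio w, insert (t2 v.1) (Ahat (t2 v.1)))
        (hcard w (fun v _ => t2 v)) < t2 w := by
      rw [ht2eq w]; exact hpick2 _
    constructor
    · exact (hb _ (mem_iUnion.mpr ⟨⟨v, hvw⟩, mem_insert _ _⟩)).trans hbp
    · intro x hx
      exact (hb _ (mem_iUnion.mpr ⟨⟨v, hvw⟩, mem_insert_of_mem _ hx⟩)).trans hbp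
  have hstrict : StrictMono t2 := fun v w h => (hmono v w h).1
  have key : ∀ v w : W, v < w → Ahat (t2 v) ∩ Ahat (t2 w) = R := by
    intro v w hvw
    apply Subset.antisymm
    · rintro x ⟨hx1, hx2⟩
      have hxlt : x < t2 w := (hmono v w hvw).2 x hx1
      have hw := ht2X w
      rw [hX'] at hw
      rw [← hw]
      exact ⟨hx2, hxlt⟩
    · intro x hx
      have hv := ht2X v
      have hw := ht2X w
      rw [hX'] at hv hw
      exact ⟨(hv ▸ hx : x ∈ Ahat (t2 v) ∩ Iio (t2 v)).1,
             (hw ▸ hx : x ∈ Ahat (t2 w) ∩ Iio (t2 w)).1⟩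
  refine ⟨Set.range t2, R, ?_, ?_⟩
  · rw [mk_range_eq t2 hstrict.injective, mkW]
  · rintro _ ⟨v, rfl⟩ _ ⟨w, rfl⟩ hne
    rcases lt_trichotomy v w with hlt | heq | hgt
    · exact key v w hlt
    · exact absurd (congrArg t2 heq) hne
    · rw [inter_comm]; exact key w v hgt

end

end DeltaAux

open DeltaAux

/-- under CH, any family of `ℵ₂`-many countable sets contains a
subfamily of size `ℵ₂` forming a Δ-system. -/
theorem delta_system_CH (hCH : Cardinal.continuum = Cardinal.aleph 1)
    (α : Type) (I : Type) (hI : Cardinal.mk I = Cardinal.aleph 2)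
    (A : I → Set α) (hA : ∀ i, (A i).Countable) :
    ∃ (X : Set I) (K : Set α), Cardinal.mk X = Cardinal.aleph 2 ∧
      ∀ i ∈ X, ∀ j ∈ X, i ≠ j → A i ∩ A j = K := by
  classical
  have hCH1 : (aleph 1 : Cardinal.{0}) ^ (ℵ₀ : Cardinal) = aleph 1 := by
    have hCH0 : (continuum : Cardinal.{0}) = aleph 1 := by
      apply Cardinal.lift_injective.{_, 0}
      rw [lift_continuum, lift_aleph, Ordinal.lift_one, hCH]
    rw [← hCH0]
    exact continuum_power_aleph0
  set U := ⋃ i, A i with hUdef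
  have hUcard : #U ≤ aleph 2 := by
    calc #U ≤ Cardinal.sum (fun i => #(A i)) := mk_iUnion_le_sum_mk
      _ ≤ Cardinal.sum (fun _ : I => ℵ₀) := sum_le_sum _ _ (fun i =>
          le_aleph0_iff_set_countable.mpr (hA i))
      _ = #I * ℵ₀ := sum_const' _ _
      _ = aleph 2 := by
          rw [hI]
          exact mul_eq_left (aleph0_le_aleph 2) (aleph0_le_aleph 2) aleph0_ne_zero
  obtain ⟨φ⟩ : Nonempty (I ≃ W) := Cardinal.eq.mp (by rw [hI, mkW])
  obtain ⟨e⟩ : Nonempty (U ↪ W) := (Cardinal.le_def _ _).mp (by rw [mkW]; exact hUcard)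
  set Ahat : W → Set W := fun w => e '' {x : U | (x : α) ∈ A (φ.symm w)} with hAhatdef
  have hcnt : ∀ w, (Ahat w).Countable := fun w =>
    (((hA _).preimage Subtype.val_injective).image _)
  obtain ⟨Y, R, hY, hprop⟩ := mainW Ahat hcnt hCH1
  refine ⟨φ ⁻¹' Y, {a : α | ∃ h : a ∈ U, e ⟨a, h⟩ ∈ R}, ?_, ?_⟩
  · have h1 : φ ⁻¹' Y = φ.symm '' Y := (φ.image_symm_eq_preimage Y).symm
    rw [h1, mk_image_eq φ.symm.injective]
    refine le_antisymm ?_ hY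
    exact (mk_set_le Y).trans_eq mkW
  · intro i hi j hj hne
    have hij : Ahat (φ i) ∩ Ahat (φ j) = R :=
      hprop _ hi _ hj (fun hc => hne (φ.injective hc))
    ext a
    constructor
    · rintro ⟨hai, haj⟩
      have haU : a ∈ U := mem_iUnion.mpr ⟨i, hai⟩
      refine ⟨haU, ?_⟩
      rw [← hij]
      exact ⟨⟨⟨a, haU⟩, by simpa using hai, rfl⟩, ⟨⟨a, haU⟩, by simpa using haj, rfl⟩⟩
    · rintro ⟨haU, haR⟩
      rw [← hij] at haR
      obtain ⟨⟨x1, hx1, hex1⟩, ⟨x2, hx2, hex2⟩⟩ := haR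
      have h1 : x1 = ⟨a, haU⟩ := e.injective hex1
      have h2 : x2 = ⟨a, haU⟩ := e.injective hex2
      subst h1; subst h2
      constructor
      · simpa using hx1
      · simpa using hx2
end

section
/- In the forcing ℙ^∞, if p is a condition with p_j a singleton {t_j^p} for all j < i, and p' is defined by p'_0 = {t_0^p ⌢ t_1^p ⌢ … ⌢ t_{i-1}^p} and p'_{j+1} = p_{j+i} for j ∈ ω, then p' ≤ p, and every condition extending p is compatible with p'; equivalently, p forces (in the forcing-theoretic sense) that p' belongs to the generic filter. -/
open Set

/-- A condition of `ℙ^∞`: each coordinate is a nonempty finite set of binary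
strings of a common positive length, and infinitely many coordinates have
exactly two elements. -/
def PinfCond (p : ℕ → Finset (List Bool)) : Prop :=
  (∀ i, (p i).Nonempty ∧ ∃ k : ℕ, 0 < k ∧ ∀ t ∈ p i, t.length = k) ∧
    {j | (p j).card = 2}.Infinite

/-- The left endpoint of the `i`-th block determined by `J` (with `J₋₁ = -1`). -/
def blockStart (J : ℕ → ℕ) : ℕ → ℕ
  | 0 => 0
  | i + 1 => J i + 1

/-- `t` is a concatenation of choices from `p a, p (a+1), …, p b`. -/
def IsBlockConcat (p : ℕ → Finset (List Bool)) (a b : ℕ) (t : List Bool) : Prop :=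
  ∃ c : ℕ → List Bool, (∀ l, c l ∈ p l) ∧
    t = ((List.range (b + 1 - a)).map fun d => c (a + d)).foldr (· ++ ·) []

/-- The order of `ℙ^∞`: `q ≤ p` iff there are `j₀ < j₁ < …` such that every
element of each block `q i` is a concatenation of choices from `p` over the
corresponding interval of indices. -/
def pinfLe (q p : ℕ → Finset (List Bool)) : Prop :=
  ∃ J : ℕ → ℕ, StrictMono J ∧ ∀ i, ∀ t ∈ q i, IsBlockConcat p (blockStart J i) (J i) t


namespace PinfAux


def bcat (c : ℕ → List Bool) (a n : ℕ) : List Bool :=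
  ((List.range n).map fun d => c (a + d)).foldr (· ++ ·) []

lemma isBlockConcat_iff {p : ℕ → Finset (List Bool)} {a b : ℕ} {t : List Bool} :
    IsBlockConcat p a b t ↔ ∃ c : ℕ → List Bool, (∀ l, c l ∈ p l) ∧ t = bcat c a (b + 1 - a) :=
  Iff.rfl

lemma foldr_append (L : List (List Bool)) : L.foldr (· ++ ·) [] = L.flatten := by
  induction L with
  | nil => rfl
  | cons x xs ih => simp [ih]

lemma bcat_add (c : ℕ → List Bool) (a m n : ℕ) :
    bcat c a (m + n) = bcat c a m ++ bcat c (a + m) n := by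
  simp only [bcat, foldr_append, List.range_add, List.map_append, List.map_map,
    List.flatten_append]
  congr 1
  congr 1
  apply List.map_congr_left
  intro d _
  simp [Function.comp, Nat.add_assoc]

lemma bcat_one (c : ℕ → List Bool) (a : ℕ) : bcat c a 1 = c a := by
  simp [bcat, List.range_succ]

lemma bcat_congr {c1 c2 : ℕ → List Bool} {a b n : ℕ}
    (h : ∀ d < n, c1 (a + d) = c2 (b + d)) : bcat c1 a n = bcat c2 b n := by
  unfold bcat
  congr 1
  exact List.map_congr_left fun d hd => h d (List.mem_range.mp hd)

lemma length_bcat_pos {c : ℕ → List Bool} {a n : ℕ} (hn : 0 < n) (hc : 0 < (c a).length) :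
    0 < (bcat c a n).length := by
  obtain ⟨m, rfl⟩ : ∃ m, n = 1 + m := ⟨n - 1, by omega⟩
  rw [bcat_add, bcat_one]
  simp only [List.length_append]
  omega

lemma isBlockConcat_single {p : ℕ → Finset (List Bool)} (h : ∀ l, (p l).Nonempty)
    {a : ℕ} {u : List Bool} (hu : u ∈ p a) : IsBlockConcat p a a u := by
  choose f hf using h
  refine ⟨fun l => if l = a then u else f l, fun l => ?_, ?_⟩
  · by_cases hl : l = a <;> simp [hl, hu, hf]
  · have h1 : a + 1 - a = 1 := by omega
    rw [show ((List.range (a + 1 - a)).map fun d => (fun l => if l = a then u else f l) (a + d)).foldr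
        (· ++ ·) [] = bcat (fun l => if l = a then u else f l) a (a + 1 - a) from rfl, h1, bcat_one]
    simp

lemma isBlockConcat_append {p : ℕ → Finset (List Bool)} {a b e : ℕ} {s s' : List Bool}
    (hab : a ≤ b + 1) (hbe : b ≤ e)
    (h1 : IsBlockConcat p a b s) (h2 : IsBlockConcat p (b + 1) e s') :
    IsBlockConcat p a e (s ++ s') := by
  rw [isBlockConcat_iff] at h1 h2 ⊢
  obtain ⟨c1, hc1, rfl⟩ := h1
  obtain ⟨c2, hc2, rfl⟩ := h2
  refine ⟨fun l => if l ≤ b then c1 l else c2 l, fun l => ?_, ?_⟩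
  · by_cases hl : l ≤ b <;> simp [hl, hc1, hc2]
  · have he : e + 1 - a = (b + 1 - a) + (e + 1 - (b + 1)) := by omega
    rw [he, bcat_add]
    congr 1
    · exact (bcat_congr fun d hd => by simp [show a + d ≤ b by omega]).symm
    · have hab2 : a + (b + 1 - a) = b + 1 := by omega
      rw [hab2]
      exact (bcat_congr fun d hd => by simp [show ¬ b + 1 + d ≤ b by omega]).symm


end PinfAux
namespace PinfAux


def mergeUpTo (q : ℕ → Finset (List Bool)) : ℕ → Finset (List Bool)
  | 0 => q 0
  | n + 1 => ((mergeUpTo q n) ×ˢ q (n + 1)).image fun x => x.1 ++ x.2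

lemma mergeUpTo_nonempty {q : ℕ → Finset (List Bool)} (h : ∀ l, (q l).Nonempty) (n : ℕ) :
    (mergeUpTo q n).Nonempty := by
  induction n with
  | zero => exact h 0
  | succ n ih => exact Finset.Nonempty.image (ih.product (h (n + 1))) _

lemma mem_mergeUpTo {q : ℕ → Finset (List Bool)} (h : ∀ l, (q l).Nonempty) {n : ℕ}
    {s : List Bool} :
    s ∈ mergeUpTo q n ↔ ∃ c : ℕ → List Bool, (∀ l, c l ∈ q l) ∧ s = bcat c 0 (n + 1) := by
  induction n generalizing s with
  | zero =>
    constructor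
    · intro hs
      choose f hf using h
      refine ⟨fun l => if l = 0 then s else f l, fun l => ?_, by rw [bcat_one]; simp⟩
      by_cases hl : l = 0
      · subst hl; simpa [mergeUpTo] using hs
      · simp [hl, hf]
    · rintro ⟨c, hc, rfl⟩
      rw [bcat_one]
      exact hc 0
  | succ n ih =>
    constructor
    · intro hs
      simp only [mergeUpTo, Finset.mem_image, Finset.mem_product] at hs
      obtain ⟨⟨x, u⟩, ⟨hx, hu⟩, rfl⟩ := hs
      obtain ⟨c, hc, rfl⟩ := ih.mp hx
      refine ⟨fun l => if l = n + 1 then u else c l, fun l => ?_, ?_⟩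
      · by_cases hl : l = n + 1 <;> simp [hl, hu, hc]
      · rw [bcat_add _ 0 (n + 1) 1, bcat_one]
        congr 1
        · exact bcat_congr fun d hd => (if_neg (by omega : ¬(0 + d = n + 1))).symm
        · simp
    · rintro ⟨c, hc, rfl⟩
      simp only [mergeUpTo, Finset.mem_image, Finset.mem_product]
      refine ⟨⟨bcat c 0 (n + 1), c (n + 1)⟩, ⟨ih.mpr ⟨c, hc, rfl⟩, hc (n + 1)⟩, ?_⟩
      rw [bcat_add c 0 (n + 1) 1, bcat_one]
      simp

lemma mergeUpTo_length {q : ℕ → Finset (List Bool)}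
    (h : ∀ l, ∃ k, 0 < k ∧ ∀ x ∈ q l, x.length = k) (n : ℕ) :
    ∃ k, 0 < k ∧ ∀ x ∈ mergeUpTo q n, x.length = k := by
  induction n with
  | zero => exact h 0
  | succ n ih =>
    obtain ⟨k, hk, hlen⟩ := ih
    obtain ⟨k', hk', hlen'⟩ := h (n + 1)
    refine ⟨k + k', by omega, fun x hx => ?_⟩
    simp only [mergeUpTo, Finset.mem_image, Finset.mem_product] at hx
    obtain ⟨⟨y, u⟩, ⟨hy, hu⟩, rfl⟩ := hx
    simp [List.length_append, hlen y hy, hlen' u hu]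

/-- Merging the first `i` blocks of a decomposition. -/
lemma pinfLe_merge {p p' : ℕ → Finset (List Bool)} (hpne : ∀ l, (p l).Nonempty)
    {i : ℕ} (hi : 0 < i)
    (h0 : ∀ s ∈ p' 0, IsBlockConcat p 0 (i - 1) s)
    (hs : ∀ j, p' (j + 1) = p (j + i)) : pinfLe p' p := by
  refine ⟨fun n => n + i - 1, fun a b hab => show a + i - 1 < b + i - 1 by omega, fun n => ?_⟩
  cases n with
  | zero =>
    have e : (0 : ℕ) + i - 1 = i - 1 := by omega
    show ∀ s ∈ p' 0, IsBlockConcat p 0 (0 + i - 1) s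
    rw [e]
    exact h0
  | succ j =>
    intro u hu
    rw [hs j] at hu
    show IsBlockConcat p ((j + i - 1) + 1) (j + 1 + i - 1) u
    have e1 : (j + i - 1) + 1 = j + i := by omega
    have e2 : j + 1 + i - 1 = j + i := by omega
    rw [e1, e2]
    exact isBlockConcat_single hpne hu

/-- Shift a block concatenation of `p` (over an interval `⊆ [i, ∞)`) to one of `p'`. -/
lemma shift_blockConcat {p p' : ℕ → Finset (List Bool)} {i : ℕ} {T : List Bool}
    (hp'0 : p' 0 = {T}) (hp's : ∀ j, p' (j + 1) = p (j + i))
    {a b : ℕ} {u : List Bool} (ha : i ≤ a) (hab : a ≤ b + 1)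
    (h : IsBlockConcat p a b u) : IsBlockConcat p' (a - i + 1) (b + 1 - i) u := by
  rw [isBlockConcat_iff] at h ⊢
  obtain ⟨c, hc, rfl⟩ := h
  refine ⟨fun l => if l = 0 then T else c (l - 1 + i), fun l => ?_, ?_⟩
  · cases l with
    | zero => rw [hp'0]; simp
    | succ m =>
      rw [hp's]
      simpa using hc (m + i)
  · have e : (b + 1 - i) + 1 - (a - i + 1) = b + 1 - a := by omega
    rw [e]
    refine bcat_congr fun d hd => ?_
    have e2 : a - i + 1 + d ≠ 0 := by omega
    rw [if_neg e2]
    exact congrArg c (by omega)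


end PinfAux
namespace PinfAux


lemma blockConcat_merge {p : ℕ → Finset (List Bool)} {J : ℕ → ℕ} (hJm : StrictMono J)
    {c : ℕ → List Bool} (h : ∀ l, IsBlockConcat p (blockStart J l) (J l) (c l)) (n : ℕ) :
    IsBlockConcat p 0 (J n) (bcat c 0 (n + 1)) := by
  induction n with
  | zero =>
    rw [show (0 : ℕ) + 1 = 1 from rfl, bcat_one]
    exact h 0
  | succ n ih =>
    rw [bcat_add c 0 (n + 1) 1, bcat_one]
    refine isBlockConcat_append (by omega) (le_of_lt (hJm (Nat.lt_succ_self n))) ih ?_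
    simpa [blockStart] using h (n + 1)


end PinfAux

open PinfAux in
/-- if `p ∈ ℙ^∞` has singleton coordinates `{t_j}` for `j < i`, and
`p'` is obtained by merging these into the single first block
`{t₀ ⌢ t₁ ⌢ … ⌢ t_{i-1}}` and shifting, then `p' ≤ p` and every condition
extending `p` is compatible with `p'` (i.e. `p ⊩ p' ∈ G`). -/
theorem pinf_merge_forces_generic (p p' : ℕ → Finset (List Bool)) (hp : PinfCond p)
    (i : ℕ) (hi : 0 < i) (t : ℕ → List Bool) (ht : ∀ j, j < i → p j = {t j})
    (hp'0 : p' 0 = {((List.range i).map t).foldr (· ++ ·) []})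
    (hp's : ∀ j, p' (j + 1) = p (j + i)) :
    PinfCond p' ∧ pinfLe p' p ∧
      ∀ q : ℕ → Finset (List Bool), PinfCond q → pinfLe q p →
        ∃ r : ℕ → Finset (List Bool), PinfCond r ∧ pinfLe r q ∧ pinfLe r p' := by
  obtain ⟨hp1, hp2⟩ := hp
  have hpne : ∀ l, (p l).Nonempty := fun l => (hp1 l).1
  have htmem : ∀ j, j < i → t j ∈ p j := fun j hj => by
    rw [ht j hj]; exact Finset.mem_singleton_self _
  set T : List Bool := ((List.range i).map t).foldr (· ++ ·) [] with hTdef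
  have hTcat : T = bcat t 0 i := by
    unfold bcat
    rw [hTdef]
    congr 1
    apply List.map_congr_left
    intro d _
    simp
  have hp'ne : ∀ l, (p' l).Nonempty := by
    intro l
    cases l with
    | zero => rw [hp'0]; exact Finset.singleton_nonempty _
    | succ j => rw [hp's]; exact hpne _
  have hT0 : ∀ s ∈ p' 0, IsBlockConcat p 0 (i - 1) s := by
    intro s hs
    rw [hp'0, Finset.mem_singleton] at hs
    subst hs
    choose f hf using hpne
    refine ⟨fun l => if l < i then t l else f l, fun l => ?_, ?_⟩
    · show (if l < i then t l else f l) ∈ p l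
      by_cases hl : l < i
      · rw [if_pos hl]; exact htmem l hl
      · rw [if_neg hl]; exact hf l
    · show T = bcat (fun l => if l < i then t l else f l) 0 (i - 1 + 1 - 0)
      have e : i - 1 + 1 - 0 = i := by omega
      rw [e, hTcat]
      exact bcat_congr fun d hd => (if_pos (show 0 + d < i by omega)).symm
  have hcondp' : PinfCond p' := by
    constructor
    · intro n
      cases n with
      | zero =>
        refine ⟨hp'ne 0, T.length, ?_, ?_⟩
        · obtain ⟨k0, hk0, hlen0⟩ := (hp1 0).2
          have ht0 : (t 0).length = k0 := hlen0 _ (htmem 0 hi)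
          rw [hTcat]
          exact length_bcat_pos hi (by omega)
        · intro x hx
          rw [hp'0, Finset.mem_singleton] at hx
          rw [hx]
      | succ j =>
        rw [hp's]
        exact hp1 (j + i)
    · apply Set.infinite_of_forall_exists_gt
      intro a
      obtain ⟨b, hbS, hb⟩ := hp2.exists_gt (a + i)
      refine ⟨b - i + 1, ?_, by omega⟩
      show (p' (b - i + 1)).card = 2
      rw [hp's]
      have e : b - i + i = b := by omega
      rw [e]
      exact hbS
  refine ⟨hcondp', pinfLe_merge hpne hi hT0 hp's, ?_⟩
  intro q hq hqp
  obtain ⟨J, hJm, hJ⟩ := hqp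
  have hJge : ∀ n, n ≤ J n := fun n => hJm.le_apply
  have hqne : ∀ l, (q l).Nonempty := fun l => (hq.1 l).1
  refine ⟨fun n => match n with
    | 0 => mergeUpTo q (i - 1)
    | Nat.succ j => q (j + i), ?_, ?_, ?_⟩
  · -- PinfCond r
    constructor
    · intro n
      cases n with
      | zero =>
        exact ⟨mergeUpTo_nonempty hqne _, mergeUpTo_length (fun l => (hq.1 l).2) _⟩
      | succ j => exact hq.1 (j + i)
    · apply Set.infinite_of_forall_exists_gt
      intro a
      obtain ⟨b, hbS, hb⟩ := hq.2.exists_gt (a + i)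
      refine ⟨b - i + 1, ?_, by omega⟩
      show (q (b - i + i)).card = 2
      have e : b - i + i = b := by omega
      rw [e]
      exact hbS
  · -- r ≤ q
    refine pinfLe_merge hqne hi ?_ (fun j => rfl)
    intro s hs
    obtain ⟨c, hc, rfl⟩ := (mem_mergeUpTo hqne).mp hs
    exact ⟨c, hc, rfl⟩
  · -- r ≤ p'
    refine ⟨fun n => J (n + i - 1) + 1 - i, ?_, ?_⟩
    · intro a b hab
      show J (a + i - 1) + 1 - i < J (b + i - 1) + 1 - i
      have h1 := hJm (show a + i - 1 < b + i - 1 by omega)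
      have h2 := hJge (a + i - 1)
      have h3 := hJge (b + i - 1)
      omega
    · intro n
      cases n with
      | zero =>
        intro s hs
        obtain ⟨c, hc, hs_eq⟩ := (mem_mergeUpTo hqne).mp hs
        have hbig : IsBlockConcat p 0 (J (i - 1)) (bcat c 0 ((i - 1) + 1)) :=
          blockConcat_merge hJm (fun l => hJ l (c l) (hc l)) (i - 1)
        obtain ⟨cp, hcp, hs2⟩ := hbig
        have hJi : i - 1 ≤ J (i - 1) := hJge (i - 1)
        have htail : IsBlockConcat p i (J (i - 1)) (bcat cp i (J (i - 1) + 1 - i)) :=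
          ⟨cp, hcp, rfl⟩
        have hshift := shift_blockConcat hp'0 hp's (le_refl i) (by omega) htail
        have e1 : i - i + 1 = 1 := by omega
        rw [e1] at hshift
        have hhead : IsBlockConcat p' 0 0 T :=
          isBlockConcat_single hp'ne (by rw [hp'0]; exact Finset.mem_singleton_self _)
        have happ := isBlockConcat_append (by omega) (by omega) hhead hshift
        have hsplit : bcat cp 0 (J (i - 1) + 1)
            = bcat cp 0 i ++ bcat cp i (J (i - 1) + 1 - i) := by
          have h5 := bcat_add cp 0 i (J (i - 1) + 1 - i)
          rw [Nat.zero_add] at h5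
          rw [show i + (J (i - 1) + 1 - i) = J (i - 1) + 1 from by omega] at h5
          exact h5
        have hhe : bcat cp 0 i = T := by
          rw [hTcat]
          refine bcat_congr fun d hd => ?_
          have hmem := hcp (0 + d)
          rw [ht (0 + d) (by omega), Finset.mem_singleton] at hmem
          exact hmem
        show IsBlockConcat p' 0 (J (0 + i - 1) + 1 - i) s
        simp only [Nat.zero_add]
        have hs2' : bcat c 0 (i - 1 + 1) = bcat cp 0 (J (i - 1) + 1 - 0) := hs2
        rw [Nat.sub_zero] at hs2'
        have hs3 : s = T ++ bcat cp i (J (i - 1) + 1 - i) := by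
          rw [hs_eq, hs2', hsplit, hhe]
        rw [hs3]
        exact happ
      | succ j =>
        intro u hu
        have hu' : u ∈ q (j + i) := hu
        have hblock := hJ (j + i) u hu'
        have e : j + i = (j + i - 1) + 1 := by omega
        rw [e] at hblock
        have hb2 : IsBlockConcat p (J (j + i - 1) + 1) (J ((j + i - 1) + 1)) u := hblock
        have hge1 := hJge (j + i - 1)
        have hlt := hJm (show j + i - 1 < (j + i - 1) + 1 by omega)
        have hshift := shift_blockConcat hp'0 hp's
          (show i ≤ J (j + i - 1) + 1 by omega)
          (show J (j + i - 1) + 1 ≤ J ((j + i - 1) + 1) + 1 by omega) hb2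
        show IsBlockConcat p' ((J (j + i - 1) + 1 - i) + 1) (J (j + 1 + i - 1) + 1 - i) u
        have e3 : j + 1 + i - 1 = (j + i - 1) + 1 := by omega
        have e2 : (J (j + i - 1) + 1 - i) + 1 = J (j + i - 1) + 1 - i + 1 := rfl
        rw [e3, e2]
        exact hshift
end

section
/- If T ⊆ 2^{<ω} is a tree and [T] is G₁-independent (no two branches differ in exactly one coordinate) and t ∈ T is such that both t⌢⟨0⟩ and t⌢⟨1⟩ have extensions to branches of T, then there exists k ∈ ω such that the level-k successor sets {u ∈ 2^k : t⌢⟨0⟩⌢u ∈ T, extendible to a branch} and {u ∈ 2^k : t⌢⟨1⟩⌢u ∈ T, extendible to a branch} are disjoint. -/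
open Set

/-- A tree: a set of finite binary sequences closed under initial segments. -/
def IsTree (T : Set (List Bool)) : Prop := ∀ t ∈ T, ∀ s : List Bool, s <+: t → s ∈ T

/-- The initial segment of length `n` of `x : 2^ω` as a finite sequence. -/
def initSeg (x : ℕ → Bool) (n : ℕ) : List Bool := (List.range n).map x

/-- `x` is an infinite branch of `T`. -/
def IsBranch (T : Set (List Bool)) (x : ℕ → Bool) : Prop := ∀ n, initSeg x n ∈ T

/-- `[T]` is `G₁`-independent: no two branches differ in exactly one coordinate. -/
def BranchesG1Indep (T : Set (List Bool)) : Prop :=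
  ∀ x y : ℕ → Bool, IsBranch T x → IsBranch T y → ¬ ∃! n : ℕ, x n ≠ y n

/-- `s` is extendible to a branch of `T`. -/
def Extendible (T : Set (List Bool)) (s : List Bool) : Prop :=
  ∃ x : ℕ → Bool, IsBranch T x ∧ initSeg x s.length = s

-- aux lemmas
lemma initSeg_length (x : ℕ → Bool) (n : ℕ) : (initSeg x n).length = n := by
  simp [initSeg]

lemma initSeg_succ (x : ℕ → Bool) (n : ℕ) :
    initSeg x (n+1) = initSeg x n ++ [x n] := by
  simp [initSeg, List.range_succ]

lemma initSeg_get (x : ℕ → Bool) (n i : ℕ) (h : i < (initSeg x n).length) :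
    (initSeg x n).get ⟨i, h⟩ = x i := by
  simp [initSeg]

lemma initSeg_prefix (x : ℕ → Bool) {m n : ℕ} (h : m ≤ n) :
    initSeg x m <+: initSeg x n := by
  rw [show initSeg x m = (initSeg x n).take m by
    simp [initSeg, ← List.map_take, List.take_range, Nat.min_eq_left h]]
  exact List.take_prefix _ _

/-- follow a finite list then an infinite sequence -/
noncomputable def follow (s : List Bool) (z : ℕ → Bool) : ℕ → Bool :=
  fun n => if h : n < s.length then s.get ⟨n, h⟩ else z (n - s.length)

lemma initSeg_follow (s : List Bool) (z : ℕ → Bool) (m : ℕ) :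
    initSeg (follow s z) (s.length + m) = s ++ initSeg z m := by
  induction m with
  | zero =>
      have hz0 : initSeg z 0 = [] := by simp [initSeg]
      rw [Nat.add_zero, hz0, List.append_nil]
      apply List.ext_get (by simp [initSeg])
      intro i h1 h2
      rw [initSeg_get, follow, dif_pos h2]
  | succ m ih =>
      rw [← Nat.add_assoc, initSeg_succ, ih, initSeg_succ, ← List.append_assoc]
      congr 2
      rw [follow, dif_neg (by omega)]
      congr 1
      omega

open Classical in
/-- König's lemma style sequence -/
noncomputable def branchSeq (P : List Bool → Prop) : ℕ → List Bool
  | 0 => []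
  | n+1 => branchSeq P n ++ [if P (branchSeq P n ++ [false]) then false else true]


/-- if `[T]` is `G₁`-independent and both `t⌢⟨0⟩` and `t⌢⟨1⟩` are
extendible to branches, then for some `k` the extendible level-`k` successor sets
above `t⌢⟨0⟩` and `t⌢⟨1⟩` are disjoint. -/
theorem G1_tree_successors_disjoint (T : Set (List Bool)) (hT : IsTree T)
    (hind : BranchesG1Indep T) (t : List Bool) (htT : t ∈ T)
    (h0 : Extendible T (t ++ [false])) (h1 : Extendible T (t ++ [true])) :
    ∃ k : ℕ,
      Disjoint
        {u : List Bool | u.length = k ∧ t ++ [false] ++ u ∈ T ∧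
          Extendible T (t ++ [false] ++ u)}
        {u : List Bool | u.length = k ∧ t ++ [true] ++ u ∈ T ∧
          Extendible T (t ++ [true] ++ u)} := by
  by_contra hcon
  push_neg at hcon
  -- S : common successors in T
  set S : List Bool → Prop := fun u => t ++ [false] ++ u ∈ T ∧ t ++ [true] ++ u ∈ T with hS
  have hSpre : ∀ u v : List Bool, S u → v <+: u → S v := by
    rintro u v ⟨hu0, hu1⟩ hv
    exact ⟨hT _ hu0 _ (by exact (List.prefix_append_right_inj _).mpr hv),
           hT _ hu1 _ (by exact (List.prefix_append_right_inj _).mpr hv)⟩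
  -- P : u has arbitrarily long extensions in S
  set P : List Bool → Prop := fun u => ∀ k, ∃ v : List Bool, v.length = k ∧ S (u ++ v) with hP
  have hP0 : P [] := by
    intro k
    obtain ⟨u, hu⟩ := Set.not_disjoint_iff.mp (hcon k)
    obtain ⟨⟨hl, hu0, _⟩, ⟨_, hu1, _⟩⟩ := hu
    exact ⟨u, hl, by simp only [hS, List.nil_append]; exact ⟨hu0, hu1⟩⟩
  -- dichotomy
  have hdich : ∀ u, P u → P (u ++ [false]) ∨ P (u ++ [true]) := by
    intro u hu
    by_contra hc
    push_neg at hc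
    obtain ⟨hc0, hc1⟩ := hc
    simp only [hP, not_forall] at hc0 hc1
    obtain ⟨k0, hk0⟩ := hc0
    obtain ⟨k1, hk1⟩ := hc1
    push_neg at hk0 hk1
    obtain ⟨v, hvl, hvS⟩ := hu (max k0 k1 + 1)
    match v, hvl with
    | b :: v', hvl =>
      have hvl' : v'.length = max k0 k1 := by simpa using hvl
      have key : ∀ (kb : ℕ), kb ≤ max k0 k1 →
          ∃ w : List Bool, w.length = kb ∧ S (u ++ [b] ++ w) := by
        intro kb hkb
        refine ⟨v'.take kb, by simp [hvl']; omega,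
          hSpre (u ++ [b] ++ v') _ ?_
            ((List.prefix_append_right_inj _).mpr (List.take_prefix _ _))⟩
        rw [List.append_assoc]
        exact hvS
      cases b with
      | false =>
          obtain ⟨w, hwl, hwS⟩ := key k0 (le_max_left _ _)
          exact hk0 w hwl hwS
      | true =>
          obtain ⟨w, hwl, hwS⟩ := key k1 (le_max_right _ _)
          exact hk1 w hwl hwS
  -- the sequence
  classical
  have hPn : ∀ n, P (branchSeq P n) := by
    intro n
    induction n with
    | zero => exact hP0
    | succ n ih =>
        rw [branchSeq]
        by_cases h : P (branchSeq P n ++ [false])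
        · rwa [if_pos h]
        · rw [if_neg h]
          rcases hdich _ ih with h' | h'
          · exact absurd h' h
          · exact h'
  set z : ℕ → Bool := fun n => if P (branchSeq P n ++ [false]) then false else true with hz
  have hiz : ∀ n, initSeg z n = branchSeq P n := by
    intro n
    induction n with
    | zero => simp [initSeg, branchSeq]
    | succ n ih => rw [initSeg_succ, ih, branchSeq]
  have hSz : ∀ n, S (initSeg z n) := by
    intro n
    obtain ⟨v, hvl, hvS⟩ := (hiz n ▸ hPn n) 0
    rw [List.length_eq_zero_iff] at hvl
    simpa [hvl] using hvS
  -- branches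
  have hz0 : initSeg z 0 = [] := by simp [initSeg]
  have hbranch : ∀ b : Bool, IsBranch T (follow (t ++ [b]) z) := by
    intro b n
    rcases le_or_gt (t ++ [b]).length n with h | h
    · obtain ⟨m, rfl⟩ : ∃ m, n = (t ++ [b]).length + m := ⟨n - (t ++ [b]).length, by omega⟩
      rw [initSeg_follow]
      cases b
      · exact (hSz m).1
      · exact (hSz m).2
    · have h2 : initSeg (follow (t ++ [b]) z) n <+: t ++ [b] := by
        have h3 := initSeg_prefix (follow (t ++ [b]) z) h.le
        rw [← Nat.add_zero (t ++ [b]).length, initSeg_follow, hz0,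
          List.append_nil] at h3
        exact h3
      apply hT (t ++ [b]) ?_ _ h2
      have h4 := hSz 0
      rw [hz0] at h4
      obtain ⟨h4a, h4b⟩ := h4
      rw [List.append_nil] at h4a h4b
      cases b
      · exact h4a
      · exact h4b
  -- x and y differ exactly at t.length
  set x := follow (t ++ [false]) z with hx
  set y := follow (t ++ [true]) z with hy
  have hlen : (t ++ [false]).length = t.length + 1 := by simp
  have hlen' : (t ++ [true]).length = t.length + 1 := by simp
  have hxy : ∀ n, n ≠ t.length → x n = y n := by
    intro n hn
    rcases lt_or_gt_of_ne hn with h | h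
    · rw [hx, hy, follow, follow, dif_pos (by omega), dif_pos (by omega)]
      simp only [List.get_eq_getElem]
      rw [List.getElem_append_left (by omega), List.getElem_append_left (by omega)]
    · rw [hx, hy, follow, follow, dif_neg (by omega), dif_neg (by omega), hlen, hlen']
  have hne : x t.length ≠ y t.length := by
    rw [hx, hy, follow, follow, dif_pos (by omega), dif_pos (by omega)]
    simp only [List.get_eq_getElem]
    rw [List.getElem_append_right (by omega), List.getElem_append_right (by omega)]
    simp
  exact hind x y (hbranch false) (hbranch true)
    ⟨t.length, hne, fun n hn => by by_contra h; exact hn (hxy n h)⟩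
end
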